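/- arXiv:1705.10124 — 2 statements merged into one kernel-verified Lean document; each statement's English description precedes it below -/
import Mathlib

section
/- The slow potassium adaptation gate of the cortical neuron models remains in the unit interval: let τ_max > 0, define p_∞(v) = 1/(exp(−(v+35)/10) + 1) and τ_p(v) = τ_max/(3.3·exp((v+35)/20) + exp(−(v+35)/20)), let V : ℝ → ℝ be continuous, and let p : ℝ → ℝ be differentiable with p'(t) = (p_∞(V(t)) − p(t))/τ_p(V(t)) for all t ≥ 0. If p(0) ∈ [0,1], then p(t) ∈ [0,1] for all t ≥ 0. -/
open Set

/-- The slow potassium adaptation gate `p` of the cortical neuron models remains in the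
unit interval. -/
theorem slow_potassium_gate_stays_in_unit_interval
    (τmax : ℝ) (hτ : 0 < τmax)
    (pinf τp : ℝ → ℝ)
    (hpinf : ∀ v, pinf v = 1 / (Real.exp (-(v + 35) / 10) + 1))
    (hτp : ∀ v, τp v = τmax / (3.3 * Real.exp ((v + 35) / 20) + Real.exp (-(v + 35) / 20)))
    (V : ℝ → ℝ) (hV : Continuous V)
    (p : ℝ → ℝ) (hp : Differentiable ℝ p)
    (hode : ∀ t, 0 ≤ t → deriv p t = (pinf (V t) - p t) / τp (V t))
    (h0 : p 0 ∈ Set.Icc (0 : ℝ) 1) :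
    ∀ t, 0 ≤ t → p t ∈ Set.Icc (0 : ℝ) 1 := by
  have hτppos : ∀ v, 0 < τp v := by
    intro v
    rw [hτp v]
    have h1 : 0 < 3.3 * Real.exp ((v + 35) / 20) + Real.exp (-(v + 35) / 20) := by
      positivity
    positivity
  have hpinf_pos : ∀ v, 0 < pinf v := by
    intro v; rw [hpinf v]
    have : 0 < Real.exp (-(v + 35) / 10) + 1 := by positivity
    positivity
  have hpinf_lt1 : ∀ v, pinf v < 1 := by
    intro v; rw [hpinf v]
    rw [div_lt_one (by positivity)]
    nlinarith [Real.exp_pos (-(v + 35) / 10)]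
  intro t ht
  constructor
  · -- lower bound: apply upper bound lemma to -p vs 0
    have key : ∀ ⦃x⦄, x ∈ Icc (0:ℝ) t → (-p) x ≤ (0:ℝ) := by
      refine image_le_of_deriv_right_lt_deriv_boundary
        (f := fun s => -p s) (f' := fun s => -deriv p s)
        (B := fun _ => 0) (B' := fun _ => 0)
        (hp.continuous.neg.continuousOn) ?_ (by simpa using h0.1)
        (fun x => hasDerivAt_const x 0) ?_
      · intro x hx
        exact ((hp x).hasDerivAt.neg).hasDerivWithinAt
      · intro x hx hfx
        have hpx : p x = 0 := by simpa [neg_eq_zero] using hfx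
        show -deriv p x < 0
        rw [hode x hx.1, hpx, sub_zero]
        have : 0 < pinf (V x) / τp (V x) := div_pos (hpinf_pos _) (hτppos _)
        linarith
    have := key (Set.right_mem_Icc.2 ht)
    simpa using this
  · have key : ∀ ⦃x⦄, x ∈ Icc (0:ℝ) t → p x ≤ (1:ℝ) := by
      refine image_le_of_deriv_right_lt_deriv_boundary
        (f := p) (f' := deriv p)
        (B := fun _ => 1) (B' := fun _ => 0)
        (hp.continuous.continuousOn) ?_ h0.2
        (fun x => hasDerivAt_const x 1) ?_
      · intro x hx
        exact (hp x).hasDerivAt.hasDerivWithinAt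
      · intro x hx hfx
        show deriv p x < 0
        have hpx : p x = 1 := hfx
        rw [hode x hx.1, hpx]
        have : (pinf (V x) - 1) / τp (V x) < 0 :=
          div_neg_of_neg_of_pos (by linarith [hpinf_lt1 (V x)]) (hτppos _)
        linarith
    exact key (Set.right_mem_Icc.2 ht)
end

section
/- In the three-current fast-spiking neuron model without external stimulus, the membrane potential remains between the potassium and sodium reversal potentials: let C > 0, g_l > 0, g_Na ≥ 0, g_K ≥ 0 be real constants, and E_K ≤ E_l ≤ E_Na real constants. Let m, h, n : ℝ → ℝ be continuous functions with values in [0,1], and let V : ℝ → ℝ be differentiable with C·V'(t) = −g_l(V(t)−E_l) − g_Na·m(t)³h(t)(V(t)−E_Na) − g_K·n(t)⁴(V(t)−E_K) for all t ≥ 0. If V(0) ∈ [E_K, E_Na], then V(t) ∈ [E_K, E_Na] for all t ≥ 0. -/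
/-- If `f` is differentiable, starts below `a`, and has nonpositive derivative
whenever it is at or above `a` (for nonnegative times), then it stays below `a`. -/
lemma stays_below (f : ℝ → ℝ) (a : ℝ) (hf : Differentiable ℝ f) (h0 : f 0 ≤ a)
    (hd : ∀ t, 0 ≤ t → a ≤ f t → deriv f t ≤ 0) :
    ∀ t, 0 ≤ t → f t ≤ a := by
  by_contra hcon
  push_neg at hcon
  obtain ⟨t, ht0, hta⟩ := hcon
  set S : Set ℝ := Set.Icc 0 t ∩ f ⁻¹' Set.Iic a with hS
  have hSne : S.Nonempty := ⟨0, ⟨le_refl 0, ht0⟩, h0⟩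
  have hSbdd : BddAbove S := ⟨t, fun u hu => hu.1.2⟩
  have hSclosed : IsClosed S :=
    isClosed_Icc.inter (isClosed_Iic.preimage hf.continuous)
  set s := sSup S with hs
  have hsS : s ∈ S := hSclosed.csSup_mem hSne hSbdd
  have hsa : f s ≤ a := hsS.2
  have hs0 : 0 ≤ s := hsS.1.1
  have hst : s ≤ t := hsS.1.2
  have hgt : ∀ u, s < u → u ≤ t → a < f u := by
    intro u hsu hut
    by_contra hle
    push_neg at hle
    have : u ∈ S := ⟨⟨hs0.trans hsu.le, hut⟩, hle⟩
    exact absurd (le_csSup hSbdd this) (not_le.mpr hsu)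
  have hslt : s < t := lt_of_le_of_ne hst (fun heq => absurd hsa (heq ▸ not_le.mpr hta))
  have hanti : AntitoneOn f (Set.Icc s t) := by
    apply antitoneOn_of_deriv_nonpos (convex_Icc s t) hf.continuous.continuousOn
      (hf.differentiableOn.mono interior_subset)
    intro x hx
    rw [interior_Icc] at hx
    exact hd x (hs0.trans hx.1.le) (hgt x hx.1 hx.2.le).le
  have := hanti ⟨le_refl s, hst⟩ ⟨hst, le_refl t⟩ hst
  exact absurd (this.trans hsa) (not_le.mpr hta)

/-- In the three-current fast-spiking neuron model without external stimulus, the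
membrane potential remains between the potassium and sodium reversal potentials. -/
theorem fs_voltage_stays_between_reversal_potentials
    (C gl gNa gK El ENa EK : ℝ)
    (hC : 0 < C) (hgl : 0 < gl) (hgNa : 0 ≤ gNa) (hgK : 0 ≤ gK)
    (hKl : EK ≤ El) (hlNa : El ≤ ENa)
    (m h n : ℝ → ℝ)
    (hm : Continuous m) (hh : Continuous h) (hn : Continuous n)
    (hm01 : ∀ t, m t ∈ Set.Icc (0 : ℝ) 1)
    (hh01 : ∀ t, h t ∈ Set.Icc (0 : ℝ) 1)
    (hn01 : ∀ t, n t ∈ Set.Icc (0 : ℝ) 1)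
    (V : ℝ → ℝ) (hV : Differentiable ℝ V)
    (hode : ∀ t, 0 ≤ t → C * deriv V t =
      -(gl * (V t - El)) - gNa * (m t) ^ 3 * h t * (V t - ENa)
        - gK * (n t) ^ 4 * (V t - EK))
    (h0 : V 0 ∈ Set.Icc EK ENa) :
    ∀ t, 0 ≤ t → V t ∈ Set.Icc EK ENa := by
  have hA : ∀ t, 0 ≤ gNa * (m t) ^ 3 * h t := fun t =>
    mul_nonneg (mul_nonneg hgNa (pow_nonneg (hm01 t).1 3)) (hh01 t).1
  have hB : ∀ t, 0 ≤ gK * (n t) ^ 4 := fun t =>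
    mul_nonneg hgK (pow_nonneg (hn01 t).1 4)
  intro t ht
  constructor
  · -- lower bound: apply stays_below to -V and -EK
    have hub : ∀ u, 0 ≤ u → (fun x => -V x) u ≤ -EK := by
      apply stays_below (fun x => -V x) (-EK) hV.neg (by simpa using h0.1)
      intro u hu hVu
      have hVu' : V u ≤ EK := by linarith [neg_le_neg hVu]
      have hd : deriv (fun x => -V x) u = -deriv V u := by
        simp [deriv_neg]
      rw [hd]
      have hode' := hode u hu
      have : 0 ≤ C * deriv V u := by
        rw [hode']
        have h1 : 0 ≤ -(gl * (V u - El)) := by nlinarith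
        have h2 : 0 ≤ -(gNa * (m u) ^ 3 * h u * (V u - ENa)) := by
          have := hA u; nlinarith
        have h3 : 0 ≤ -(gK * (n u) ^ 4 * (V u - EK)) := by
          have := hB u; nlinarith
        linarith
      nlinarith
    have := hub t ht
    simpa using neg_le_neg this
  · apply stays_below V ENa hV h0.2 _ t ht
    intro u hu hVu
    have hode' := hode u hu
    have : C * deriv V u ≤ 0 := by
      rw [hode']
      have h1 : gl * (V u - El) ≥ 0 := by nlinarith
      have h2 : gNa * (m u) ^ 3 * h u * (V u - ENa) ≥ 0 := by
        have := hA u; nlinarith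
      have h3 : gK * (n u) ^ 4 * (V u - EK) ≥ 0 := by
        have := hB u; nlinarith
      linarith
    nlinarith
end
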